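/- There are no Ulrich partitions with exactly 4 blocks. -/

import Mathlib

/-- A list of integers is strictly decreasing. -/
def StrictDec (l : List ℤ) : Prop := l.Chain' (· > ·)

/-- A list has exactly one repeated entry: the number of distinct values is one less
than the length. -/
def OneRepeat (l : List ℤ) : Prop := l.toFinset.card + 1 = l.length

/-- Time evolution of a partition in several blocks: with `s` blocks, every entry of the
`i`-th block (0-indexed) has `t * (s - 1 - i)` subtracted from it. -/
def evolveGen (B : List (List ℤ)) (t : ℤ) : List ℤ :=
  (B.zipIdx.map (fun p => p.1.map (fun x => x - t * ((B.length - 1 - p.2 : ℕ) : ℤ)))).flatten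

/-- The dimension `N = Σ_{i<j} lᵢ lⱼ` of a partition with blocks of sizes `l₁, ..., lₛ`. -/
def dimGen (B : List (List ℤ)) : ℕ :=
  ((B.map List.length).sum ^ 2 - ((B.map List.length).map (· ^ 2)).sum) / 2

/-- A partition with several nonempty blocks is Ulrich: the concatenated sequence is strictly
decreasing, and for each `t ∈ {1, ..., N}` the evolved list has exactly one repeated entry. -/
def IsUlrichGen (B : List (List ℤ)) : Prop :=
  (∀ l ∈ B, l ≠ []) ∧ StrictDec (evolveGen B 0) ∧
    ∀ t : ℕ, 1 ≤ t → t ≤ dimGen B → OneRepeat (evolveGen B (t : ℤ))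


lemma dup_analysis (L : List ℤ) (h : L.toFinset.card + 1 = L.length) :
    ∃ v, L.count v = 2 ∧ ∀ w, w ≠ v → L.count w ≤ 1 := by
  classical
  have hsum : ∑ a ∈ L.toFinset, L.count a = L.length := by
    have h0 := Multiset.toFinset_sum_count_eq (L : Multiset ℤ)
    simpa using h0
  have hcnt1 : ∀ a ∈ L.toFinset, 1 ≤ L.count a := by
    intro a ha
    exact List.count_pos_iff.mpr (List.mem_toFinset.mp ha)
  set f : ℤ → ℕ := fun a => L.count a - 1 with hf
  have hsum2 : ∑ a ∈ L.toFinset, f a = 1 := by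
    have h1 : ∑ a ∈ L.toFinset, (f a + 1) = ∑ a ∈ L.toFinset, L.count a :=
      Finset.sum_congr rfl (fun a ha => by have := hcnt1 a ha; simp [hf]; omega)
    rw [Finset.sum_add_distrib] at h1
    simp only [Finset.sum_const, smul_eq_mul, mul_one] at h1
    omega
  obtain ⟨v, hvmem, hvne⟩ := Finset.exists_ne_zero_of_sum_ne_zero (by rw [hsum2]; exact one_ne_zero)
  have hvle : f v ≤ 1 := hsum2 ▸ Finset.single_le_sum (fun i _ => Nat.zero_le _) hvmem
  have hrest : ∑ a ∈ L.toFinset.erase v, f a = 0 := by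
    have := Finset.add_sum_erase _ f hvmem
    omega
  refine ⟨v, by have := hcnt1 v hvmem; simp [hf] at hvne hvle; omega, ?_⟩
  intro w hw
  by_cases hwL : w ∈ L.toFinset
  · have hw0 : f w = 0 := by
      have := Finset.sum_eq_zero_iff.mp hrest w (Finset.mem_erase.mpr ⟨hw, hwL⟩)
      exact this
    simp [hf] at hw0
    omega
  · have : L.count w = 0 := by
      rw [List.count_eq_zero]
      exact fun hcon => hwL (List.mem_toFinset.mpr hcon)
    omega

lemma cnt_le_one (l : List ℤ) (hl : l.Nodup) (s v : ℤ) :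
    (l.map (fun x => x - s)).count v ≤ 1 := by
  apply List.nodup_iff_count_le_one.mp
  exact hl.map (fun x y h => by omega)

lemma cnt_pos (l : List ℤ) (s v a : ℤ) (ha : a ∈ l) (h : a - s = v) :
    1 ≤ (l.map (fun x => x - s)).count v :=
  List.count_pos_iff.mpr (List.mem_map.mpr ⟨a, ha, h⟩)

lemma cnt_mem (l : List ℤ) (s v : ℤ) (h : 1 ≤ (l.map (fun x => x - s)).count v) :
    ∃ a ∈ l, a - s = v :=
  List.mem_map.mp (List.count_pos_iff.mp h)

def S6 : Finset (ℕ × ℕ) := {(0,1),(0,2),(0,3),(1,2),(1,3),(2,3)}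

def wt : ℕ → ℤ := fun i => 3 - (i:ℤ)

def blkF (lA lB lC lD : List ℤ) : ℕ → Finset ℤ := fun i =>
  match i with
  | 0 => lA.toFinset
  | 1 => lB.toFinset
  | 2 => lC.toFinset
  | _ => lD.toFinset

def PrF (lA lB lC lD : List ℤ) : Finset ((ℕ × ℕ) × ℤ × ℤ) :=
  S6.biUnion (fun q => ((blkF lA lB lC lD q.1) ×ˢ (blkF lA lB lC lD q.2)).image
    (fun z => (q, z.1, z.2)))

lemma mem_PrF {lA lB lC lD : List ℤ} {q : ℕ × ℕ} {x y : ℤ} (hq : q ∈ S6)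
    (hx : x ∈ blkF lA lB lC lD q.1) (hy : y ∈ blkF lA lB lC lD q.2) :
    (q, x, y) ∈ PrF lA lB lC lD :=
  Finset.mem_biUnion.mpr ⟨q, hq, Finset.mem_image.mpr
    ⟨(x, y), Finset.mem_product.mpr ⟨hx, hy⟩, rfl⟩⟩

lemma card_PrF (lA lB lC lD : List ℤ) (hA : lA.Nodup) (hB : lB.Nodup)
    (hC : lC.Nodup) (hD : lD.Nodup) :
    (PrF lA lB lC lD).card =
      lA.length * lB.length + lA.length * lC.length + lA.length * lD.length +
      lB.length * lC.length + lB.length * lD.length + lC.length * lD.length := by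
  classical
  rw [PrF, Finset.card_biUnion]
  · have hcard : ∀ q : ℕ × ℕ,
        (((blkF lA lB lC lD q.1) ×ˢ (blkF lA lB lC lD q.2)).image
          (fun z : ℤ × ℤ => (q, z.1, z.2))).card =
        (blkF lA lB lC lD q.1).card * (blkF lA lB lC lD q.2).card := by
      intro q
      rw [Finset.card_image_of_injective _ (by intro z z' h; simpa [Prod.ext_iff] using h),
        Finset.card_product]
    simp only [hcard]
    rw [show S6 = {(0,1),(0,2),(0,3),(1,2),(1,3),(2,3)} from rfl]
    rw [Finset.sum_insert (by decide), Finset.sum_insert (by decide),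
      Finset.sum_insert (by decide), Finset.sum_insert (by decide),
      Finset.sum_insert (by decide), Finset.sum_singleton]
    simp only [blkF]
    rw [List.toFinset_card_of_nodup hA, List.toFinset_card_of_nodup hB,
      List.toFinset_card_of_nodup hC, List.toFinset_card_of_nodup hD]
    ring
  · intro q hq q' hq' hne
    simp only [Finset.disjoint_left, Finset.mem_image]
    rintro p ⟨z, _, rfl⟩ ⟨z', _, hz'⟩
    have hqq : q' = q := congrArg Prod.fst hz'
    exact hne hqq.symm


/-- Core combinatorial lemma: no "Ulrich time system" on four blocks exists.
A,B,C,D are the value lists; N the dimension. Hypotheses encode that every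
cross pair has an integral collision time in [1,N], that collision times of
(the relevant) distinct pairs differ, and that every time in [1,N] is realized. -/
theorem noQuad (A B C D : List ℤ) (N : ℤ)
    (hN6 : 6 ≤ N)
    (a₀ : ℤ) (ha₀ : a₀ ∈ A) (b₀ : ℤ) (hb₀ : b₀ ∈ B)
    (c₀ : ℤ) (hc₀ : c₀ ∈ C) (d₀ : ℤ) (hd₀ : d₀ ∈ D)
    (tAB : ∀ a ∈ A, ∀ b ∈ B, 1 ≤ a - b ∧ a - b ≤ N)
    (tBC : ∀ b ∈ B, ∀ c ∈ C, 1 ≤ b - c ∧ b - c ≤ N)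
    (tCD : ∀ c ∈ C, ∀ d ∈ D, 1 ≤ c - d ∧ c - d ≤ N)
    (tAC : ∀ a ∈ A, ∀ c ∈ C, ∃ t, 1 ≤ t ∧ t ≤ N ∧ a - c = 2*t)
    (tBD : ∀ b ∈ B, ∀ d ∈ D, ∃ t, 1 ≤ t ∧ t ≤ N ∧ b - d = 2*t)
    (tAD : ∀ a ∈ A, ∀ d ∈ D, ∃ t, 1 ≤ t ∧ t ≤ N ∧ a - d = 3*t)
    (n1 : ∀ a ∈ A, ∀ b ∈ B, ∀ b' ∈ B, ∀ c ∈ C, a - b ≠ b' - c)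
    (n2 : ∀ b ∈ B, ∀ c ∈ C, ∀ c' ∈ C, ∀ d ∈ D, b - c ≠ c' - d)
    (n3 : ∀ a ∈ A, ∀ b ∈ B, ∀ c ∈ C, ∀ d ∈ D, a - b ≠ c - d)
    (cover : ∀ t : ℤ, 1 ≤ t → t ≤ N →
      (∃ a ∈ A, ∃ b ∈ B, a - b = t) ∨ (∃ b ∈ B, ∃ c ∈ C, b - c = t) ∨
      (∃ c ∈ C, ∃ d ∈ D, c - d = t) ∨ (∃ a ∈ A, ∃ c ∈ C, a - c = 2*t) ∨
      (∃ b ∈ B, ∃ d ∈ D, b - d = 2*t) ∨ (∃ a ∈ A, ∃ d ∈ D, a - d = 3*t)) :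
    False := by
  classical
  -- parity helpers
  have hAA : ∀ a ∈ A, ∀ a' ∈ A, (2:ℤ) ∣ a - a' := by
    intro a ha a' ha'
    obtain ⟨t₁, _, _, h₁⟩ := tAC a ha c₀ hc₀
    obtain ⟨t₂, _, _, h₂⟩ := tAC a' ha' c₀ hc₀
    exact ⟨t₁ - t₂, by omega⟩
  have hCC : ∀ c ∈ C, ∀ c' ∈ C, (2:ℤ) ∣ c - c' := by
    intro c hc c' hc'
    obtain ⟨t₁, _, _, h₁⟩ := tAC a₀ ha₀ c hc
    obtain ⟨t₂, _, _, h₂⟩ := tAC a₀ ha₀ c' hc'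
    exact ⟨t₂ - t₁, by omega⟩
  have hBB : ∀ b ∈ B, ∀ b' ∈ B, (2:ℤ) ∣ b - b' := by
    intro b hb b' hb'
    obtain ⟨t₁, _, _, h₁⟩ := tBD b hb d₀ hd₀
    obtain ⟨t₂, _, _, h₂⟩ := tBD b' hb' d₀ hd₀
    exact ⟨t₁ - t₂, by omega⟩
  have hDD : ∀ d ∈ D, ∀ d' ∈ D, (2:ℤ) ∣ d - d' := by
    intro d hd d' hd'
    obtain ⟨t₁, _, _, h₁⟩ := tBD b₀ hb₀ d hd
    obtain ⟨t₂, _, _, h₂⟩ := tBD b₀ hb₀ d' hd'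
    exact ⟨t₂ - t₁, by omega⟩
  have hAC2 : ∀ a ∈ A, ∀ c ∈ C, (2:ℤ) ∣ a - c := by
    intro a ha c hc; obtain ⟨t, _, _, h⟩ := tAC a ha c hc; exact ⟨t, h⟩
  have hBD2 : ∀ b ∈ B, ∀ d ∈ D, (2:ℤ) ∣ b - d := by
    intro b hb d hd; obtain ⟨t, _, _, h⟩ := tBD b hb d hd; exact ⟨t, h⟩
  -- all gap-1 collision diffs are ≡ a₀ - b₀ (mod 2)
  have g1parAB : ∀ a ∈ A, ∀ b ∈ B, (2:ℤ) ∣ (a - b) - (a₀ - b₀) := by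
    intro a ha b hb
    obtain ⟨u, hu⟩ := hAA a ha a₀ ha₀
    obtain ⟨v, hv⟩ := hBB b hb b₀ hb₀
    exact ⟨u - v, by omega⟩
  have g1parBC : ∀ b ∈ B, ∀ c ∈ C, (2:ℤ) ∣ (b - c) - (a₀ - b₀) := by
    intro b hb c hc
    obtain ⟨u, hu⟩ := hBB b hb b₀ hb₀
    obtain ⟨v, hv⟩ := hAC2 a₀ ha₀ c hc
    exact ⟨u + v + b₀ - a₀, by omega⟩
  have g1parCD : ∀ c ∈ C, ∀ d ∈ D, (2:ℤ) ∣ (c - d) - (a₀ - b₀) := by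
    intro c hc d hd
    obtain ⟨u, hu⟩ := hAC2 a₀ ha₀ c hc
    obtain ⟨v, hv⟩ := hBD2 b₀ hb₀ d hd
    exact ⟨-u + v, by omega⟩
  -- time 1 is a gap-1 collision, hence a₀ - b₀ is odd
  have hodd1 : (2:ℤ) ∣ 1 - (a₀ - b₀) := by
    rcases cover 1 (by omega) (by omega) with ⟨a,ha,b,hb,h⟩|⟨b,hb,c,hc,h⟩|⟨c,hc,d,hd,h⟩|
      ⟨a,ha,c,hc,h⟩|⟨b,hb,d,hd,h⟩|⟨a,ha,d,hd,h⟩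
    · exact h ▸ g1parAB a ha b hb
    · exact h ▸ g1parBC b hb c hc
    · exact h ▸ g1parCD c hc d hd
    · -- a - c = 2 forces two collisions at time 1
      have h₁ := tAB a ha b₀ hb₀
      have h₂ := tBC b₀ hb₀ c hc
      have : a - b₀ = b₀ - c := by omega
      exact absurd this (n1 a ha b₀ hb₀ b₀ hb₀ c hc)
    · have h₁ := tBC b hb c₀ hc₀
      have h₂ := tCD c₀ hc₀ d hd
      have : b - c₀ = c₀ - d := by omega
      exact absurd this (n2 b hb c₀ hc₀ c₀ hc₀ d hd)
    · have h₁ := tAB a ha b₀ hb₀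
      have h₂ := tBC b₀ hb₀ c₀ hc₀
      have h₃ := tCD c₀ hc₀ d hd
      have : a - b₀ = b₀ - c₀ := by omega
      exact absurd this (n1 a ha b₀ hb₀ b₀ hb₀ c₀ hc₀)
  -- time N is a gap-1 collision, hence N is odd
  have hoddN : (2:ℤ) ∣ N - (a₀ - b₀) := by
    rcases cover N (by omega) le_rfl with ⟨a,ha,b,hb,h⟩|⟨b,hb,c,hc,h⟩|⟨c,hc,d,hd,h⟩|
      ⟨a,ha,c,hc,h⟩|⟨b,hb,d,hd,h⟩|⟨a,ha,d,hd,h⟩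
    · exact h ▸ g1parAB a ha b hb
    · exact h ▸ g1parBC b hb c hc
    · exact h ▸ g1parCD c hc d hd
    · have h₁ := tAB a ha b₀ hb₀
      have h₂ := tBC b₀ hb₀ c hc
      have : a - b₀ = b₀ - c := by omega
      exact absurd this (n1 a ha b₀ hb₀ b₀ hb₀ c hc)
    · have h₁ := tBC b hb c₀ hc₀
      have h₂ := tCD c₀ hc₀ d hd
      have : b - c₀ = c₀ - d := by omega
      exact absurd this (n2 b hb c₀ hc₀ c₀ hc₀ d hd)
    · have h₁ := tAB a ha b₀ hb₀
      have h₂ := tBC b₀ hb₀ c₀ hc₀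
      have h₃ := tCD c₀ hc₀ d hd
      have : a - b₀ = b₀ - c₀ := by omega
      exact absurd this (n1 a ha b₀ hb₀ b₀ hb₀ c₀ hc₀)
  -- an even time must be covered by a gap-2 pair
  have evenGap2 : ∀ t : ℤ, 1 ≤ t → t ≤ N → 2 ∣ t →
      (∃ a ∈ A, ∃ c ∈ C, a - c = 2*t) ∨ (∃ b ∈ B, ∃ d ∈ D, b - d = 2*t) := by
    intro t ht1 htN hte
    rcases cover t ht1 htN with ⟨a,ha,b,hb,h⟩|⟨b,hb,c,hc,h⟩|⟨c,hc,d,hd,h⟩|h|h|⟨a,ha,d,hd,h⟩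
    · obtain ⟨u,hu⟩ := g1parAB a ha b hb
      obtain ⟨v,hv⟩ := hodd1; obtain ⟨e,he⟩ := hte; omega
    · obtain ⟨u,hu⟩ := g1parBC b hb c hc
      obtain ⟨v,hv⟩ := hodd1; obtain ⟨e,he⟩ := hte; omega
    · obtain ⟨u,hu⟩ := g1parCD c hc d hd
      obtain ⟨v,hv⟩ := hodd1; obtain ⟨e,he⟩ := hte; omega
    · exact Or.inl h
    · exact Or.inr h
    · -- a - d = 3t with t even contradicts oddness of a - d
      obtain ⟨u,hu⟩ := hAC2 a ha c₀ hc₀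
      obtain ⟨w,hw⟩ := g1parCD c₀ hc₀ d hd
      obtain ⟨v,hv⟩ := hodd1; obtain ⟨e,he⟩ := hte; omega
  obtain ⟨vo, hvo⟩ := hodd1
  obtain ⟨vN, hvN⟩ := hoddN
  -- time 2 and time N-1 collisions
  have t2 := evenGap2 2 (by omega) (by omega) ⟨1, rfl⟩
  have tN1 := evenGap2 (N-1) (by omega) (by omega) ⟨(N-1)/2, by omega⟩
  by_cases hB2 : ∃ b ∈ B, ∃ b' ∈ B, b ≠ b'
  · obtain ⟨b, hb, b', hb', hbb⟩ := hB2
    -- with two distinct b's, a-c = 4 and a-c = 2N-2 are impossible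
    have noAC : ∀ s : ℤ, (s = 4 ∨ s = 2*N-2) → ∀ a ∈ A, ∀ c ∈ C, a - c ≠ s := by
      intro s hs a ha c hc hacs
      have h1 := tAB a ha b hb
      have h2 := tAB a ha b' hb'
      have h3 := tBC b hb c hc
      have h4 := tBC b' hb' c hc
      have e1 := n1 a ha b hb b hb c hc
      have e2 := n1 a ha b hb b' hb' c hc
      have e3 := n1 a ha b' hb' b hb c hc
      have e4 := n1 a ha b' hb' b' hb' c hc
      -- a-b ≠ a-b' and b-c ≠ b'-c since b ≠ b'
      omega
    by_cases hC2 : ∃ c ∈ C, ∃ c' ∈ C, c ≠ c'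
    · obtain ⟨c, hc, c', hc', hcc⟩ := hC2
      have noBD : ∀ s : ℤ, (s = 4 ∨ s = 2*N-2) → ∀ e ∈ B, ∀ d ∈ D, e - d ≠ s := by
        intro s hs e he d hd heds
        have h1 := tBC e he c hc
        have h2 := tBC e he c' hc'
        have h3 := tCD c hc d hd
        have h4 := tCD c' hc' d hd
        have e1 := n2 e he c hc c hc d hd
        have e2 := n2 e he c hc c' hc' d hd
        have e3 := n2 e he c' hc' c hc d hd
        have e4 := n2 e he c' hc' c' hc' d hd
        omega
      rcases t2 with ⟨a,ha,cx,hcx,h⟩|⟨e,he,d,hd,h⟩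
      · exact noAC 4 (Or.inl rfl) a ha cx hcx (by omega)
      · exact noBD 4 (Or.inl rfl) e he d hd (by omega)
    · -- C has a single value c₀ (all elements equal): mirror "l = 1" case
      push_neg at hC2
      have hCeq : ∀ c ∈ C, c = c₀ := fun c hc => hC2 c hc c₀ hc₀
      -- time 2: must be b-d = 4 (a-c=4 impossible by noAC)
      have hy : ∃ y z : ℤ, (y = 1 ∧ z = 3 ∨ y = 3 ∧ z = 1) ∧
          (∃ e ∈ B, e - c₀ = y) ∧ (∃ d ∈ D, c₀ - d = z) := by
        rcases t2 with ⟨a,ha,cx,hcx,h⟩|⟨e,he,d,hd,h⟩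
        · exact absurd (by omega : a - cx = 4) (noAC 4 (Or.inl rfl) a ha cx hcx)
        · -- e - d = 4, c₀ between
          have h1 := tBC e he c₀ hc₀
          have h2 := tCD c₀ hc₀ d hd
          have e1 := n2 e he c₀ hc₀ c₀ hc₀ d hd
          refine ⟨e - c₀, c₀ - d, by omega, ⟨e, he, rfl⟩, ⟨d, hd, rfl⟩⟩
      obtain ⟨y, z, hyz, ⟨e₁, he₁, hey⟩, ⟨d₁, hd₁, hdz⟩⟩ := hy
      -- time N-1 : must be b-d = 2N-2 (a-c route impossible)
      rcases tN1 with ⟨a,ha,cx,hcx,h⟩|⟨eb,heb,d,hd,h⟩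
      · exact absurd (by omega : a - cx = 2*N-2) (noAC (2*N-2) (Or.inr rfl) a ha cx hcx)
      · -- eb - d = 2N-2 ; {eb - c₀, c₀ - d} = {N, N-2}
        have h1 := tBC eb heb c₀ hc₀
        have h2 := tCD c₀ hc₀ d hd
        have e1 := n2 eb heb c₀ hc₀ c₀ hc₀ d hd
        -- pick any a ∈ A ; u := a - c₀ even in [2,2N]
        obtain ⟨tu, htu1, htu2, htu⟩ := tAC a₀ ha₀ c₀ hc₀
        -- pair (a₀, eb) : a₀ - eb ∈ [1,N] ; pair (a₀, e₁) : a₀ - e₁ ∈ [1,N]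
        have h3 := tAB a₀ ha₀ eb heb
        have h4 := tAB a₀ ha₀ e₁ he₁
        -- conflicts
        have q1 := n3 a₀ ha₀ eb heb c₀ hc₀ d₁ hd₁   -- a₀-eb ≠ c₀-d₁ (=z)
        have q2 := n1 a₀ ha₀ eb heb e₁ he₁ c₀ hc₀   -- a₀-eb ≠ e₁-c₀ (=y)
        have q3 := n3 a₀ ha₀ e₁ he₁ c₀ hc₀ d hd     -- a₀-e₁ ≠ c₀-d (=N or N-2)
        omega
  · -- B has a single value b₀
    push_neg at hB2
    have hBeq : ∀ b ∈ B, b = b₀ := fun b hb => hB2 b hb b₀ hb₀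
    by_cases hC2 : ∃ c ∈ C, ∃ c' ∈ C, c ≠ c'
    · obtain ⟨c, hc, c', hc', hcc⟩ := hC2
      -- "k = 1" main case
      have noBD : ∀ s : ℤ, (s = 4 ∨ s = 2*N-2) → ∀ e ∈ B, ∀ d ∈ D, e - d ≠ s := by
        intro s hs e he d hd heds
        have h1 := tBC e he c hc
        have h2 := tBC e he c' hc'
        have h3 := tCD c hc d hd
        have h4 := tCD c' hc' d hd
        have e1 := n2 e he c hc c hc d hd
        have e2 := n2 e he c hc c' hc' d hd
        have e3 := n2 e he c' hc' c hc d hd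
        have e4 := n2 e he c' hc' c' hc' d hd
        omega
      -- time 2 must be a-c = 4
      have hy : ∃ a₂ ∈ A, ∃ c₂ ∈ C, a₂ - c₂ = 4 := by
        rcases t2 with ⟨a,ha,cx,hcx,h⟩|⟨e,he,d,hd,h⟩
        · exact ⟨a, ha, cx, hcx, by omega⟩
        · exact absurd (by omega : e - d = 4) (noBD 4 (Or.inl rfl) e he d hd)
      obtain ⟨a₂, ha₂, c₂, hc₂, h42⟩ := hy
      have hx1 := tAB a₂ ha₂ b₀ hb₀
      have hy1 := tBC b₀ hb₀ c₂ hc₂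
      have e13 := n1 a₂ ha₂ b₀ hb₀ b₀ hb₀ c₂ hc₂
      -- time N-1 must be a-c = 2N-2
      rcases tN1 with ⟨ab,hab,cb,hcb,h⟩|⟨e,he,d,hd,h⟩
      · -- ab - cb = 2N-2 ; {ab-b₀, b₀-cb} = {N, N-2}
        have hx2 := tAB ab hab b₀ hb₀
        have hy2 := tBC b₀ hb₀ cb hcb
        have e2 := n1 ab hab b₀ hb₀ b₀ hb₀ cb hcb
        -- u := b₀ - d₀ even
        obtain ⟨tu, htu1, htu2, htu⟩ := tBD b₀ hb₀ d₀ hd₀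
        have hz2 := tCD cb hcb d₀ hd₀
        have hz1 := tCD c₂ hc₂ d₀ hd₀
        have q1 := n3 a₂ ha₂ b₀ hb₀ cb hcb d₀ hd₀
        have q2 := n2 b₀ hb₀ c₂ hc₂ cb hcb d₀ hd₀
        have q3 := n3 ab hab b₀ hb₀ c₂ hc₂ d₀ hd₀
        have q4 := n2 b₀ hb₀ cb hcb c₂ hc₂ d₀ hd₀
        omega
      · exact absurd (by omega : e - d = 2*N-2) (noBD (2*N-2) (Or.inr rfl) e he d hd)
    · -- both B and C singletons
      push_neg at hC2
      have hCeq : ∀ c ∈ C, c = c₀ := fun c hc => hC2 c hc c₀ hc₀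
      have hy1 := tBC b₀ hb₀ c₀ hc₀
      -- time 2 gives b₀ - c₀ ≤ 3
      have hyle : b₀ - c₀ ≤ 3 := by
        rcases t2 with ⟨a,ha,cx,hcx,h⟩|⟨e,he,d,hd,h⟩
        · have := hCeq cx hcx
          have h1 := tAB a ha b₀ hb₀
          omega
        · have := hBeq e he
          have h2 := tCD c₀ hc₀ d hd
          omega
      -- time N-1 impossible
      rcases tN1 with ⟨a,ha,cx,hcx,h⟩|⟨e,he,d,hd,h⟩
      · have := hCeq cx hcx
        have h1 := tAB a ha b₀ hb₀
        omega
      · have := hBeq e he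
        have h2 := tCD c₀ hc₀ d hd
        omega

lemma dim4 (lA lB lC lD : List ℤ) :
    dimGen [lA, lB, lC, lD] =
      lA.length * lB.length + lA.length * lC.length + lA.length * lD.length +
      lB.length * lC.length + lB.length * lD.length + lC.length * lD.length := by
  have halg : ∀ j k l m : ℕ, ((j+k+l+m)^2 - (j^2+k^2+l^2+m^2))/2
      = j*k+j*l+j*m+k*l+k*m+l*m := by
    intro j k l m
    have h : (j+k+l+m)^2 = (j^2+k^2+l^2+m^2) + 2*(j*k+j*l+j*m+k*l+k*m+l*m) := by ring
    rw [h, Nat.add_sub_cancel_left, Nat.mul_div_cancel_left _ (by norm_num)]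
  have h2 : dimGen [lA,lB,lC,lD] = ((lA.length+lB.length+lC.length+lD.length)^2
      - (lA.length^2+lB.length^2+lC.length^2+lD.length^2))/2 := by
    simp [dimGen]; ring_nf
  rw [h2, halg]

/-- There are no Ulrich partitions with exactly 4 blocks. -/
theorem stmt4 (B : List (List ℤ)) (h4 : B.length = 4) : ¬ IsUlrichGen B := by
  classical
  obtain ⟨lA, lB, lC, lD, rfl⟩ : ∃ a b c d, B = [a, b, c, d] := by
    rcases B with _ | ⟨a, B⟩; · simp at h4
    rcases B with _ | ⟨b, B⟩; · simp at h4
    rcases B with _ | ⟨c, B⟩; · simp at h4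
    rcases B with _ | ⟨d, B⟩; · simp at h4
    rcases B with _ | ⟨e, B⟩
    · exact ⟨a, b, c, d, rfl⟩
    · simp at h4
  rintro ⟨hne, hsd, hrep⟩
  obtain ⟨a₀, ha₀⟩ := List.exists_mem_of_ne_nil lA (hne lA (by simp))
  obtain ⟨b₀, hb₀⟩ := List.exists_mem_of_ne_nil lB (hne lB (by simp))
  obtain ⟨c₀, hc₀⟩ := List.exists_mem_of_ne_nil lC (hne lC (by simp))
  obtain ⟨d₀, hd₀⟩ := List.exists_mem_of_ne_nil lD (hne lD (by simp))
  have ev_eq : ∀ t : ℤ, evolveGen [lA,lB,lC,lD] t =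
      lA.map (fun x => x - t*3) ++ (lB.map (fun x => x - t*2) ++
        (lC.map (fun x => x - t*1) ++ lD.map (fun x => x - t*0))) := by
    intro t; simp [evolveGen, List.zipIdx]
  have ev0 : evolveGen [lA,lB,lC,lD] 0 = lA ++ (lB ++ (lC ++ lD)) := by
    rw [ev_eq 0]; simp
  have hpw : (lA ++ (lB ++ (lC ++ lD))).Pairwise (· > ·) := by
    have h := hsd; rw [StrictDec, ev0] at h
    exact List.isChain_iff_pairwise.mp h
  have h1 := List.pairwise_append.mp hpw
  have h2 := List.pairwise_append.mp h1.2.1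
  have h3 := List.pairwise_append.mp h2.2.1
  have ndA : lA.Nodup := h1.1.imp ne_of_gt
  have ndB : lB.Nodup := h2.1.imp ne_of_gt
  have ndC : lC.Nodup := h3.1.imp ne_of_gt
  have ndD : lD.Nodup := h3.2.1.imp ne_of_gt
  set nN := dimGen [lA,lB,lC,lD] with hnN
  have hNval : nN = lA.length * lB.length + lA.length * lC.length + lA.length * lD.length +
      lB.length * lC.length + lB.length * lD.length + lC.length * lD.length := dim4 lA lB lC lD
  -- the key per-time collision analysis
  have key : ∀ tz : ℤ, 1 ≤ tz → tz ≤ (nN : ℤ) → ∃ v : ℤ,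
      ((lA.map (fun x => x - tz*3)).count v + (lB.map (fun x => x - tz*2)).count v
        + (lC.map (fun x => x - tz*1)).count v + (lD.map (fun x => x - tz*0)).count v = 2) ∧
      ∀ w : ℤ, w ≠ v →
        ((lA.map (fun x => x - tz*3)).count w + (lB.map (fun x => x - tz*2)).count w
          + (lC.map (fun x => x - tz*1)).count w + (lD.map (fun x => x - tz*0)).count w ≤ 1) := by
    intro tz hz1 hz2
    have htz : ((tz.toNat : ℕ) : ℤ) = tz := Int.toNat_of_nonneg (by omega)
    have hOR := hrep tz.toNat (by omega) (by omega)
    rw [htz] at hOR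
    simp only [OneRepeat] at hOR
    obtain ⟨v, hv2, hvu⟩ := dup_analysis _ hOR
    have hcnt : ∀ w : ℤ, (evolveGen [lA,lB,lC,lD] tz).count w
        = (lA.map (fun x => x - tz*3)).count w + ((lB.map (fun x => x - tz*2)).count w
          + ((lC.map (fun x => x - tz*1)).count w + (lD.map (fun x => x - tz*0)).count w)) := by
      intro w; rw [ev_eq tz]; simp [List.count_append]
    refine ⟨v, by have := hcnt v; omega, fun w hw => by
      have hle := hvu w hw; have := hcnt w; omega⟩
  -- every time in [1,N] is covered by some cross pair
  have cover : ∀ tz : ℤ, 1 ≤ tz → tz ≤ (nN:ℤ) →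
      (∃ a ∈ lA, ∃ b ∈ lB, a - b = tz) ∨ (∃ b ∈ lB, ∃ c ∈ lC, b - c = tz) ∨
      (∃ c ∈ lC, ∃ d ∈ lD, c - d = tz) ∨ (∃ a ∈ lA, ∃ c ∈ lC, a - c = 2*tz) ∨
      (∃ b ∈ lB, ∃ d ∈ lD, b - d = 2*tz) ∨ (∃ a ∈ lA, ∃ d ∈ lD, a - d = 3*tz) := by
    intro tz hz1 hz2
    obtain ⟨v, hv2, _⟩ := key tz hz1 hz2
    have bA := cnt_le_one lA ndA (tz*3) v
    have bB := cnt_le_one lB ndB (tz*2) v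
    have bC := cnt_le_one lC ndC (tz*1) v
    have bD := cnt_le_one lD ndD (tz*0) v
    by_cases hA1 : 1 ≤ (lA.map (fun x => x - tz*3)).count v
    · obtain ⟨a, ha, hav⟩ := cnt_mem lA (tz*3) v hA1
      by_cases hB1 : 1 ≤ (lB.map (fun x => x - tz*2)).count v
      · obtain ⟨b, hb, hbv⟩ := cnt_mem lB (tz*2) v hB1
        exact Or.inl ⟨a, ha, b, hb, by omega⟩
      · by_cases hC1 : 1 ≤ (lC.map (fun x => x - tz*1)).count v
        · obtain ⟨c, hc, hcv⟩ := cnt_mem lC (tz*1) v hC1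
          exact Or.inr (Or.inr (Or.inr (Or.inl ⟨a, ha, c, hc, by omega⟩)))
        · have hD1 : 1 ≤ (lD.map (fun x => x - tz*0)).count v := by omega
          obtain ⟨d, hd, hdv⟩ := cnt_mem lD (tz*0) v hD1
          exact Or.inr (Or.inr (Or.inr (Or.inr (Or.inr ⟨a, ha, d, hd, by omega⟩))))
    · by_cases hB1 : 1 ≤ (lB.map (fun x => x - tz*2)).count v
      · obtain ⟨b, hb, hbv⟩ := cnt_mem lB (tz*2) v hB1
        by_cases hC1 : 1 ≤ (lC.map (fun x => x - tz*1)).count v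
        · obtain ⟨c, hc, hcv⟩ := cnt_mem lC (tz*1) v hC1
          exact Or.inr (Or.inl ⟨b, hb, c, hc, by omega⟩)
        · have hD1 : 1 ≤ (lD.map (fun x => x - tz*0)).count v := by omega
          obtain ⟨d, hd, hdv⟩ := cnt_mem lD (tz*0) v hD1
          exact Or.inr (Or.inr (Or.inr (Or.inr (Or.inl ⟨b, hb, d, hd, by omega⟩))))
      · have hC1 : 1 ≤ (lC.map (fun x => x - tz*1)).count v := by omega
        have hD1 : 1 ≤ (lD.map (fun x => x - tz*0)).count v := by omega
        obtain ⟨c, hc, hcv⟩ := cnt_mem lC (tz*1) v hC1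
        obtain ⟨d, hd, hdv⟩ := cnt_mem lD (tz*0) v hD1
        exact Or.inr (Or.inr (Or.inl ⟨c, hc, d, hd, by omega⟩))

  -- tagged collision existence for the pigeonhole argument
  have PrExist : ∀ tz : ℤ, 1 ≤ tz → tz ≤ (nN:ℤ) → ∃ p : (ℕ×ℕ)×ℤ×ℤ,
      p ∈ PrF lA lB lC lD ∧ p.2.1 - p.2.2 = (wt p.1.1 - wt p.1.2) * tz ∧
      1 ≤ wt p.1.1 - wt p.1.2 := by
    intro tz hz1 hz2
    rcases cover tz hz1 hz2 with ⟨a,ha,b,hb,h⟩|⟨b,hb,c,hc,h⟩|⟨c,hc,d,hd,h⟩|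
      ⟨a,ha,c,hc,h⟩|⟨b,hb,d,hd,h⟩|⟨a,ha,d,hd,h⟩
    · exact ⟨((0,1),a,b), mem_PrF (by decide) (List.mem_toFinset.mpr ha)
        (List.mem_toFinset.mpr hb), by show a - b = (wt 0 - wt 1) * tz; simp [wt]; omega,
        by show (1:ℤ) ≤ wt 0 - wt 1; simp [wt]⟩
    · exact ⟨((1,2),b,c), mem_PrF (by decide) (List.mem_toFinset.mpr hb)
        (List.mem_toFinset.mpr hc), by show b - c = (wt 1 - wt 2) * tz; simp [wt]; omega,
        by show (1:ℤ) ≤ wt 1 - wt 2; simp [wt]⟩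
    · exact ⟨((2,3),c,d), mem_PrF (by decide) (List.mem_toFinset.mpr hc)
        (List.mem_toFinset.mpr hd), by show c - d = (wt 2 - wt 3) * tz; simp [wt]; omega,
        by show (1:ℤ) ≤ wt 2 - wt 3; simp [wt]⟩
    · exact ⟨((0,2),a,c), mem_PrF (by decide) (List.mem_toFinset.mpr ha)
        (List.mem_toFinset.mpr hc), by show a - c = (wt 0 - wt 2) * tz; simp [wt]; omega,
        by show (1:ℤ) ≤ wt 0 - wt 2; simp [wt]⟩
    · exact ⟨((1,3),b,d), mem_PrF (by decide) (List.mem_toFinset.mpr hb)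
        (List.mem_toFinset.mpr hd), by show b - d = (wt 1 - wt 3) * tz; simp [wt]; omega,
        by show (1:ℤ) ≤ wt 1 - wt 3; simp [wt]⟩
    · exact ⟨((0,3),a,d), mem_PrF (by decide) (List.mem_toFinset.mpr ha)
        (List.mem_toFinset.mpr hd), by show a - d = (wt 0 - wt 3) * tz; simp [wt]; omega,
        by show (1:ℤ) ≤ wt 0 - wt 3; simp [wt]⟩
  -- pigeonhole: every tagged pair collides at some time in [1,N]
  have hpr_card : (PrF lA lB lC lD).card = nN := by
    rw [card_PrF lA lB lC lD ndA ndB ndC ndD, hNval]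
  have hsI : (Finset.Icc (1:ℤ) (nN:ℤ)).card = nN := by
    rw [Int.card_Icc]; omega
  have tpair : ∀ q ∈ S6, ∀ x ∈ blkF lA lB lC lD q.1, ∀ y ∈ blkF lA lB lC lD q.2,
      ∃ tz : ℤ, 1 ≤ tz ∧ tz ≤ (nN:ℤ) ∧ x - y = (wt q.1 - wt q.2) * tz := by
    have hmem : ∀ tz (htz : tz ∈ Finset.Icc (1:ℤ) (nN:ℤ)),
        1 ≤ tz ∧ tz ≤ (nN:ℤ) := fun tz htz => Finset.mem_Icc.mp htz
    set f : ∀ tz ∈ Finset.Icc (1:ℤ) (nN:ℤ), (ℕ×ℕ)×ℤ×ℤ := fun tz htz =>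
      (PrExist tz (hmem tz htz).1 (hmem tz htz).2).choose with hfdef
    have hfspec : ∀ tz htz, (f tz htz) ∈ PrF lA lB lC lD ∧
        (f tz htz).2.1 - (f tz htz).2.2 = (wt (f tz htz).1.1 - wt (f tz htz).1.2) * tz ∧
        1 ≤ wt (f tz htz).1.1 - wt (f tz htz).1.2 := fun tz htz =>
      (PrExist tz (hmem tz htz).1 (hmem tz htz).2).choose_spec
    have hinj : ∀ t₁ t₂ h₁ h₂, f t₁ h₁ = f t₂ h₂ → t₁ = t₂ := by
      intro t₁ t₂ h₁ h₂ heq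
      obtain ⟨_, he1, hg1⟩ := hfspec t₁ h₁
      obtain ⟨_, he2, hg2⟩ := hfspec t₂ h₂
      rw [heq] at he1 hg1
      have hgne : wt (f t₂ h₂).1.1 - wt (f t₂ h₂).1.2 ≠ 0 := by omega
      exact mul_left_cancel₀ hgne (by rw [← he1, ← he2])
    have hsurj := Finset.surj_on_of_inj_on_of_card_le f (fun tz htz => (hfspec tz htz).1)
      hinj (by rw [hpr_card, hsI])
    intro q hq x hx y hy
    obtain ⟨tz, htz, hp⟩ := hsurj (q, x, y) (mem_PrF hq hx hy)
    obtain ⟨_, he, _⟩ := hfspec tz htz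
    rw [← hp] at he
    exact ⟨tz, (hmem tz htz).1, (hmem tz htz).2, he⟩
  -- the six time-range facts
  have tAB : ∀ a ∈ lA, ∀ b ∈ lB, 1 ≤ a - b ∧ a - b ≤ (nN:ℤ) := by
    intro a ha b hb
    obtain ⟨tz, hz1, hz2, he⟩ := tpair (0,1) (by decide) a
      (List.mem_toFinset.mpr ha) b (List.mem_toFinset.mpr hb)
    simp [wt] at he; omega
  have tBC : ∀ b ∈ lB, ∀ c ∈ lC, 1 ≤ b - c ∧ b - c ≤ (nN:ℤ) := by
    intro b hb c hc
    obtain ⟨tz, hz1, hz2, he⟩ := tpair (1,2) (by decide) b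
      (List.mem_toFinset.mpr hb) c (List.mem_toFinset.mpr hc)
    simp [wt] at he; omega
  have tCD : ∀ c ∈ lC, ∀ d ∈ lD, 1 ≤ c - d ∧ c - d ≤ (nN:ℤ) := by
    intro c hc d hd
    obtain ⟨tz, hz1, hz2, he⟩ := tpair (2,3) (by decide) c
      (List.mem_toFinset.mpr hc) d (List.mem_toFinset.mpr hd)
    simp [wt] at he; omega
  have tAC : ∀ a ∈ lA, ∀ c ∈ lC, ∃ t, 1 ≤ t ∧ t ≤ (nN:ℤ) ∧ a - c = 2*t := by
    intro a ha c hc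
    obtain ⟨tz, hz1, hz2, he⟩ := tpair (0,2) (by decide) a
      (List.mem_toFinset.mpr ha) c (List.mem_toFinset.mpr hc)
    exact ⟨tz, hz1, hz2, by simp [wt] at he; omega⟩
  have tBD : ∀ b ∈ lB, ∀ d ∈ lD, ∃ t, 1 ≤ t ∧ t ≤ (nN:ℤ) ∧ b - d = 2*t := by
    intro b hb d hd
    obtain ⟨tz, hz1, hz2, he⟩ := tpair (1,3) (by decide) b
      (List.mem_toFinset.mpr hb) d (List.mem_toFinset.mpr hd)
    exact ⟨tz, hz1, hz2, by simp [wt] at he; omega⟩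
  have tAD : ∀ a ∈ lA, ∀ d ∈ lD, ∃ t, 1 ≤ t ∧ t ≤ (nN:ℤ) ∧ a - d = 3*t := by
    intro a ha d hd
    obtain ⟨tz, hz1, hz2, he⟩ := tpair (0,3) (by decide) a
      (List.mem_toFinset.mpr ha) d (List.mem_toFinset.mpr hd)
    exact ⟨tz, hz1, hz2, by simp [wt] at he; omega⟩

  -- distinctness of collision times of distinct pairs
  have n1 : ∀ a ∈ lA, ∀ b ∈ lB, ∀ b' ∈ lB, ∀ c ∈ lC, a - b ≠ b' - c := by
    intro a ha b hb b' hb' c hc heq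
    have hab := tAB a ha b hb
    obtain ⟨v, hv2, hvu⟩ := key (a-b) hab.1 hab.2
    have hA1 : 1 ≤ (lA.map (fun x => x - (a-b)*3)).count (a - (a-b)*3) :=
      cnt_pos lA _ _ a ha rfl
    have hB1 : 1 ≤ (lB.map (fun x => x - (a-b)*2)).count (a - (a-b)*3) :=
      cnt_pos lB _ _ b hb (by omega)
    have hB2 : 1 ≤ (lB.map (fun x => x - (a-b)*2)).count (b' - (a-b)*2) :=
      cnt_pos lB _ _ b' hb' rfl
    have hC2 : 1 ≤ (lC.map (fun x => x - (a-b)*1)).count (b' - (a-b)*2) :=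
      cnt_pos lC _ _ c hc (by omega)
    have hv1 : a - (a-b)*3 = v := by
      by_contra hne'
      have := hvu _ hne'
      omega
    have hv2' : b' - (a-b)*2 = v := by
      by_contra hne'
      have := hvu _ hne'
      omega
    rw [hv1] at hA1 hB1
    rw [hv2'] at hB2 hC2
    omega
  have n2 : ∀ b ∈ lB, ∀ c ∈ lC, ∀ c' ∈ lC, ∀ d ∈ lD, b - c ≠ c' - d := by
    intro b hb c hc c' hc' d hd heq
    have hbc := tBC b hb c hc
    obtain ⟨v, hv2, hvu⟩ := key (b-c) hbc.1 hbc.2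
    have hB1 : 1 ≤ (lB.map (fun x => x - (b-c)*2)).count (b - (b-c)*2) :=
      cnt_pos lB _ _ b hb rfl
    have hC1 : 1 ≤ (lC.map (fun x => x - (b-c)*1)).count (b - (b-c)*2) :=
      cnt_pos lC _ _ c hc (by omega)
    have hC2 : 1 ≤ (lC.map (fun x => x - (b-c)*1)).count (c' - (b-c)*1) :=
      cnt_pos lC _ _ c' hc' rfl
    have hD2 : 1 ≤ (lD.map (fun x => x - (b-c)*0)).count (c' - (b-c)*1) :=
      cnt_pos lD _ _ d hd (by omega)
    have hv1 : b - (b-c)*2 = v := by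
      by_contra hne'
      have := hvu _ hne'
      omega
    have hv2' : c' - (b-c)*1 = v := by
      by_contra hne'
      have := hvu _ hne'
      omega
    rw [hv1] at hB1 hC1
    rw [hv2'] at hC2 hD2
    omega
  have n3 : ∀ a ∈ lA, ∀ b ∈ lB, ∀ c ∈ lC, ∀ d ∈ lD, a - b ≠ c - d := by
    intro a ha b hb c hc d hd heq
    have hab := tAB a ha b hb
    obtain ⟨v, hv2, hvu⟩ := key (a-b) hab.1 hab.2
    have hA1 : 1 ≤ (lA.map (fun x => x - (a-b)*3)).count (a - (a-b)*3) :=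
      cnt_pos lA _ _ a ha rfl
    have hB1 : 1 ≤ (lB.map (fun x => x - (a-b)*2)).count (a - (a-b)*3) :=
      cnt_pos lB _ _ b hb (by omega)
    have hC2 : 1 ≤ (lC.map (fun x => x - (a-b)*1)).count (c - (a-b)*1) :=
      cnt_pos lC _ _ c hc rfl
    have hD2 : 1 ≤ (lD.map (fun x => x - (a-b)*0)).count (c - (a-b)*1) :=
      cnt_pos lD _ _ d hd (by omega)
    have hv1 : a - (a-b)*3 = v := by
      by_contra hne'
      have := hvu _ hne'
      omega
    have hv2' : c - (a-b)*1 = v := by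
      by_contra hne'
      have := hvu _ hne'
      omega
    rw [hv1] at hA1 hB1
    rw [hv2'] at hC2 hD2
    omega
  have hN6 : (6:ℤ) ≤ (nN:ℤ) := by
    have hj : 1 ≤ lA.length := List.length_pos_iff.mpr (hne lA (by simp))
    have hk : 1 ≤ lB.length := List.length_pos_iff.mpr (hne lB (by simp))
    have hl : 1 ≤ lC.length := List.length_pos_iff.mpr (hne lC (by simp))
    have hm : 1 ≤ lD.length := List.length_pos_iff.mpr (hne lD (by simp))
    have p1 : 1 ≤ lA.length * lB.length := Nat.mul_le_mul hj hk
    have p2 : 1 ≤ lA.length * lC.length := Nat.mul_le_mul hj hl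
    have p3 : 1 ≤ lA.length * lD.length := Nat.mul_le_mul hj hm
    have p4 : 1 ≤ lB.length * lC.length := Nat.mul_le_mul hk hl
    have p5 : 1 ≤ lB.length * lD.length := Nat.mul_le_mul hk hm
    have p6 : 1 ≤ lC.length * lD.length := Nat.mul_le_mul hl hm
    omega
  exact noQuad lA lB lC lD (nN:ℤ) hN6 a₀ ha₀ b₀ hb₀ c₀ hc₀ d₀ hd₀
    tAB tBC tCD tAC tBD tAD n1 n2 n3 cover
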